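/- Let S be a nonempty finite index set, let β⁽ⁱ⁾ ∈ ℝ^p for each i ∈ S, and let β̂ ∈ ℝ^p satisfy Σ_{i∈S} ‖β⁽ⁱ⁾ − β̂‖₂ ≤ Σ_{i∈S} ‖β⁽ⁱ⁾ − β‖₂ for every β ∈ ℝ^p. Then for every point v ∈ ℝ^p, ‖β̂ − v‖₂ ≤ (2/|S|) · Σ_{i∈S} ‖β⁽ⁱ⁾ − v‖₂. -/

import Mathlib

/-- Key step of Theorem 3: the distance from the robust consolidation to any
reference point `v` is at most twice the average distance from the mini-batch
estimates to `v`. -/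
theorem consolidation_twice_average {ι : Type*} (S : Finset ι) (hne : S.Nonempty)
    {n : ℕ} (β : ι → EuclideanSpace ℝ (Fin n)) (βhat : EuclideanSpace ℝ (Fin n))
    (hmin : ∀ b : EuclideanSpace ℝ (Fin n),
      ∑ i ∈ S, ‖β i - βhat‖ ≤ ∑ i ∈ S, ‖β i - b‖) :
    ∀ v : EuclideanSpace ℝ (Fin n),
      ‖βhat - v‖ ≤ (2 / (S.card : ℝ)) * ∑ i ∈ S, ‖β i - v‖ := by
  intro v
  have hcard : (0 : ℝ) < S.card := by exact_mod_cast Finset.card_pos.mpr hne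
  rw [div_mul_eq_mul_div, le_div_iff₀ hcard]
  calc ‖βhat - v‖ * S.card = ∑ _i ∈ S, ‖βhat - v‖ := by
        rw [Finset.sum_const, nsmul_eq_mul, mul_comm]
    _ ≤ ∑ i ∈ S, (‖β i - βhat‖ + ‖β i - v‖) := by
        apply Finset.sum_le_sum
        intro i _
        have := norm_sub_le (β i - v) (β i - βhat)
        simpa [sub_sub_sub_cancel_left, add_comm] using this
    _ = ∑ i ∈ S, ‖β i - βhat‖ + ∑ i ∈ S, ‖β i - v‖ := Finset.sum_add_distrib
    _ ≤ ∑ i ∈ S, ‖β i - v‖ + ∑ i ∈ S, ‖β i - v‖ := by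
        exact add_le_add_left (hmin v) _
    _ = 2 * ∑ i ∈ S, ‖β i - v‖ := by ring
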